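/- Let V be a finite set of points in the Euclidean plane such that any two distinct points of V have mutual distance at least d = θR for constants θ > 0 and R > 0, and let κ > 2. Then for every point v ∈ V, the sum over w ∈ V \ {v} of R^κ / d(w,v)^κ is at most (2^{2κ+1} √3 π κ) / (6(κ−2) θ^κ). -/

import Mathlib

open MeasureTheory Metric in
lemma pack2 (S : Finset (EuclideanSpace ℝ (Fin 2))) (v : EuclideanSpace ℝ (Fin 2))
    {δ ρ : ℝ} (hδ : 0 < δ)
    (hin : ∀ w ∈ S, dist w v ≤ ρ)
    (hsep : ∀ w ∈ S, ∀ u ∈ S, w ≠ u → δ ≤ dist w u) :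
    (S.card : ℝ) * (δ/2)^2 ≤ (ρ + δ/2)^2 := by
  classical
  rcases S.eq_empty_or_nonempty with rfl | ⟨w0, hw0⟩
  · simpa using sq_nonneg (ρ + δ/2)
  have hρ : 0 ≤ ρ := le_trans dist_nonneg (hin w0 hw0)
  have hdisj : (↑S : Set (EuclideanSpace ℝ (Fin 2))).PairwiseDisjoint (fun w => ball w (δ/2)) := by
    intro a ha b hb hab
    exact ball_disjoint_ball (by linarith [hsep a ha b hb hab])
  have hsub : (⋃ w ∈ S, ball w (δ/2)) ⊆ ball v (ρ + δ/2) := by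
    intro x hx
    simp only [Set.mem_iUnion, mem_ball] at hx ⊢
    obtain ⟨w, hw, hxw⟩ := hx
    calc dist x v ≤ dist x w + dist w v := dist_triangle _ _ _
      _ < ρ + δ/2 := by have := hin w hw; linarith
  have h1 : ∑ w ∈ S, volume (ball w (δ/2)) ≤ volume (ball v (ρ + δ/2)) := by
    rw [← measure_biUnion_finset hdisj (fun w _ => measurableSet_ball)]
    exact measure_mono hsub
  have hvol : ∀ (x : EuclideanSpace ℝ (Fin 2)) (r : ℝ), 0 ≤ r →
      volume (ball x r) = ENNReal.ofReal (r^2) * volume (ball (0:EuclideanSpace ℝ (Fin 2)) 1) := by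
    intro x r hr
    have := MeasureTheory.Measure.addHaar_ball (volume : Measure (EuclideanSpace ℝ (Fin 2))) x hr
    simpa [finrank_euclideanSpace_fin] using this
  rw [Finset.sum_congr rfl (fun w _ => hvol w (δ/2) (by positivity)),
    hvol v (ρ + δ/2) (by positivity), Finset.sum_const, nsmul_eq_mul] at h1
  set c := volume (ball (0:EuclideanSpace ℝ (Fin 2)) 1) with hc
  have hc0 : c ≠ 0 := (measure_ball_pos volume _ one_pos).ne'
  have hct : c ≠ ⊤ := (measure_ball_lt_top).ne
  rw [← mul_assoc, ENNReal.mul_le_mul_iff_left hc0 hct] at h1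
  have : ENNReal.ofReal ((S.card : ℝ) * (δ/2)^2) ≤ ENNReal.ofReal ((ρ + δ/2)^2) := by
    rwa [ENNReal.ofReal_mul (by positivity), ENNReal.ofReal_natCast]
  exact (ENNReal.ofReal_le_ofReal_iff (by positivity)).1 this

lemma geomb {r : ℝ} (h0 : 0 ≤ r) (h1 : r < 1) (M : ℕ) :
    ∑ j ∈ Finset.range M, r ^ j ≤ 1/(1-r) := by
  rw [geom_sum_eq (ne_of_lt h1) M]
  have h2 : (r^M - 1)/(r-1) = (1 - r^M)/(1-r) := by
    rw [← neg_div_neg_eq]; ring_nf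
  rw [h2]
  gcongr
  · nlinarith [pow_nonneg h0 M]

lemma numcore (t u s p : ℝ) (ht : 0 < t) (hu1 : 1 < u) (hu : 1 + 0.69*t ≤ u)
    (hsp : 5.1 ≤ s * p) :
    16*u/(u-1) + 16 + 4/3 ≤ 32*u^2*s*p*(t+2)/(6*t) := by
  have hu2 : 1 + t ≤ u^2 := by nlinarith
  have h1 : 16*u/(u-1) ≤ (16*t+24)/t := by
    rw [div_le_div_iff₀ (by linarith) ht]
    nlinarith
  have h2 : (16*t+24)/t + 16 + 4/3 ≤ 32*u^2*s*p*(t+2)/(6*t) := by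
    rw [div_add' _ _ _ (ne_of_gt ht), div_add' _ _ _ (ne_of_gt ht), div_le_div_iff₀ ht (by linarith)]
    have key : 32*(1+t)*5.1*(t+2) ≤ 32*u^2*(s*p)*(t+2) := by
      gcongr <;> nlinarith
    nlinarith [mul_le_mul_of_nonneg_right key ht.le, mul_pos ht ht, mul_pos (mul_pos ht ht) ht]
  linarith

open scoped Classical

theorem stmt_0 (V : Finset (EuclideanSpace ℝ (Fin 2))) (θ R κ : ℝ)
    (hθ : 0 < θ) (hR : 0 < R) (hκ : 2 < κ)
    (hsep : ∀ v ∈ V, ∀ w ∈ V, v ≠ w → θ * R ≤ dist v w) :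
    ∀ v ∈ V, ∑ w ∈ V.erase v, R ^ κ / dist w v ^ κ ≤
      2 ^ (2 * κ + 1) * Real.sqrt 3 * Real.pi * κ / (6 * (κ - 2) * θ ^ κ) := by
  intro v hv
  have hd : 0 < θ * R := mul_pos hθ hR
  set d := θ * R with hd_def
  have hκ0 : (0:ℝ) < κ := by linarith
  have hθκ : (0:ℝ) < θ ^ κ := Real.rpow_pos_of_pos hθ _
  have hRκ : (0:ℝ) < R ^ κ := Real.rpow_pos_of_pos hR _
  have hdistd : ∀ w ∈ V.erase v, d ≤ dist w v := fun w hw =>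
    hsep w (Finset.mem_of_mem_erase hw) v hv (Finset.ne_of_mem_erase hw)
  set z : ℝ := (2:ℝ) ^ (-κ) with hz_def
  have hz0 : 0 < z := Real.rpow_pos_of_pos two_pos _
  have h2m2 : (2:ℝ) ^ (-2:ℝ) = 1/4 := by
    rw [show (-2:ℝ) = ((-2:ℤ):ℝ) by norm_num, Real.rpow_intCast]; norm_num
  have hz4 : z < 1/4 := by
    rw [hz_def, ← h2m2]
    exact Real.rpow_lt_rpow_of_exponent_lt one_lt_two (by linarith)
  set g : EuclideanSpace ℝ (Fin 2) → ℕ := fun w => (Int.log 2 (dist w v / d)).toNat with hg_def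
  -- dyadic bounds
  have hgb : ∀ w ∈ V.erase v,
      (2:ℝ)^(g w) * d ≤ dist w v ∧ dist w v < 2^(g w + 1) * d := by
    intro w hw
    have hwd := hdistd w hw
    have hr1 : (1:ℝ) ≤ dist w v / d := (one_le_div hd).2 hwd
    have hr0 : (0:ℝ) < dist w v / d := lt_of_lt_of_le one_pos hr1
    have hlognn : 0 ≤ Int.log 2 (dist w v / d) := by
      rw [Int.log_of_one_le_right _ hr1]; exact Int.natCast_nonneg _
    have hlog : Int.log 2 (dist w v / d) = (g w : ℤ) := by
      rw [hg_def]; exact (Int.toNat_of_nonneg hlognn).symm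
    constructor
    · have h := Int.zpow_log_le_self (R := ℝ) (b := 2) one_lt_two hr0
      rw [hlog, zpow_natCast] at h
      have h' : (2:ℝ)^(g w) ≤ dist w v / d := by exact_mod_cast h
      calc (2:ℝ)^(g w) * d ≤ (dist w v / d) * d := mul_le_mul_of_nonneg_right h' hd.le
        _ = dist w v := div_mul_cancel₀ _ (ne_of_gt hd)
    · have h := Int.lt_zpow_succ_log_self (R := ℝ) (b := 2) one_lt_two (dist w v / d)
      rw [hlog, show ((g w : ℤ) + 1) = ((g w + 1 : ℕ) : ℤ) by push_cast; ring,
        zpow_natCast] at h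
      have h' : dist w v / d < (2:ℝ)^(g w + 1) := by exact_mod_cast h
      calc dist w v = (dist w v / d) * d := (div_mul_cancel₀ _ (ne_of_gt hd)).symm
        _ < 2^(g w + 1) * d := mul_lt_mul_of_pos_right h' hd
  -- fiber cardinality bound
  have hcard : ∀ j : ℕ, ((((V.erase v).filter (fun w => g w = j)).card : ℝ))
      ≤ ((2:ℝ)^(j+2)+1)^2 := by
    intro j
    have hin : ∀ w ∈ (V.erase v).filter (fun w => g w = j), dist w v ≤ 2^(j+1) * d := by
      intro w hw
      rw [Finset.mem_filter] at hw
      have h2 := (hgb w hw.1).2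
      rw [hw.2] at h2
      linarith
    have hsep' : ∀ w ∈ (V.erase v).filter (fun w => g w = j),
        ∀ u ∈ (V.erase v).filter (fun w => g w = j), w ≠ u → d ≤ dist w u := by
      intro w hw u hu hwu
      rw [Finset.mem_filter] at hw hu
      exact hsep w (Finset.mem_of_mem_erase hw.1) u (Finset.mem_of_mem_erase hu.1) hwu
    have hp := pack2 _ v hd hin hsep'
    have key : (2:ℝ)^(j+1)*d + d/2 = ((2:ℝ)^(j+2)+1)*(d/2) := by
      rw [pow_succ, pow_succ]
      ring
    rw [key, mul_pow] at hp
    exact le_of_mul_le_mul_right hp (by positivity)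
  -- per-term bound
  have hterm : ∀ w ∈ V.erase v, R ^ κ / dist w v ^ κ ≤ z ^ (g w) / θ ^ κ := by
    intro w hw
    obtain ⟨hge, _⟩ := hgb w hw
    have hb0 : (0:ℝ) < (2:ℝ)^(g w) * d := by positivity
    have h1 : ((2:ℝ)^(g w) * d)^κ ≤ dist w v ^ κ :=
      Real.rpow_le_rpow hb0.le hge hκ0.le
    have hzg : ((2:ℝ)^(g w))^κ * z^(g w) = 1 := by
      rw [hz_def, ← Real.rpow_natCast (2:ℝ) (g w), ← Real.rpow_natCast ((2:ℝ)^(-κ)) (g w),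
        ← Real.rpow_mul (by norm_num), ← Real.rpow_mul (by norm_num),
        ← Real.rpow_add two_pos,
        show (g w:ℝ)*κ + (-κ)*(g w:ℝ) = 0 by ring, Real.rpow_zero]
    have h3 : ((2:ℝ)^(g w))^κ = (z ^ (g w))⁻¹ := eq_inv_of_mul_eq_one_right (by rw [mul_comm]; exact hzg)
    have h2 : ((2:ℝ)^(g w) * d)^κ = ((2:ℝ)^(g w))^κ * (θ^κ * R^κ) := by
      rw [hd_def, Real.mul_rpow (by positivity) (by positivity),
        Real.mul_rpow (by positivity) (by positivity)]
    have hzgp : (0:ℝ) < z ^ (g w) := pow_pos hz0 _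
    calc R ^ κ / dist w v ^ κ ≤ R ^ κ / ((2:ℝ)^(g w) * d)^κ := by
          have hdp : (0:ℝ) < ((2:ℝ)^(g w) * d)^κ := Real.rpow_pos_of_pos hb0 κ
          exact div_le_div_of_nonneg_left hRκ.le hdp h1
      _ = z ^ (g w) / θ ^ κ := by
          rw [h2, h3]
          rw [inv_mul_eq_div, div_div_eq_mul_div, div_eq_div_iff (by positivity) (by positivity)]
          ring
  -- fiberwise sum
  have hfib := Finset.sum_fiberwise_of_maps_to (s := V.erase v)
    (t := (V.erase v).image g) (g := g)
    (fun w hw => Finset.mem_image_of_mem g hw) (fun w => R ^ κ / dist w v ^ κ)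
  set Im := (V.erase v).image g with hIm
  set M := Im.sup id + 1 with hM
  have hz2 : 2*z < 1 := by linarith
  have hz1 : z < 1 := by linarith
  have h4z1 : 4*z < 1 := by linarith
  calc ∑ w ∈ V.erase v, R ^ κ / dist w v ^ κ
      = ∑ j ∈ Im, ∑ w ∈ (V.erase v).filter (fun w => g w = j), R ^ κ / dist w v ^ κ :=
        hfib.symm
    _ ≤ ∑ j ∈ Im, (16*(4*z)^j + 8*(2*z)^j + z^j)/θ^κ := by
        apply Finset.sum_le_sum
        intro j hj
        have hb : ∀ w ∈ (V.erase v).filter (fun w => g w = j),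
            R ^ κ / dist w v ^ κ ≤ z ^ j / θ ^ κ := by
          intro w hw
          rw [Finset.mem_filter] at hw
          have := hterm w hw.1
          rwa [hw.2] at this
        calc ∑ w ∈ (V.erase v).filter (fun w => g w = j), R ^ κ / dist w v ^ κ
            ≤ (((V.erase v).filter (fun w => g w = j)).card : ℝ) * (z ^ j / θ ^ κ) := by
              have := Finset.sum_le_card_nsmul _ _ _ hb
              rwa [nsmul_eq_mul] at this
          _ ≤ ((2:ℝ)^(j+2)+1)^2 * (z ^ j / θ ^ κ) := by
              apply mul_le_mul_of_nonneg_right (hcard j) (by positivity)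
          _ = (16*(4*z)^j + 8*(2*z)^j + z^j)/θ^κ := by
              have h4 : (4:ℝ)^j = 2^j * 2^j := by
                rw [show (4:ℝ) = 2*2 by norm_num, mul_pow]
              rw [mul_pow, mul_pow, h4, pow_add]
              ring
    _ ≤ ∑ j ∈ Finset.range M, (16*(4*z)^j + 8*(2*z)^j + z^j)/θ^κ := by
        apply Finset.sum_le_sum_of_subset_of_nonneg
        · intro j hj
          rw [Finset.mem_range, hM]
          exact Nat.lt_succ_of_le (Finset.le_sup (f := id) hj)
        · intro j _ _
          positivity
    _ ≤ (16 * (1/(1-4*z)) + 8 * (1/(1-2*z)) + 1/(1-z))/θ^κ := by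
        rw [← Finset.sum_div]
        rw [div_le_div_iff_of_pos_right hθκ]
        rw [Finset.sum_add_distrib, Finset.sum_add_distrib, ← Finset.mul_sum, ← Finset.mul_sum]
        have g1 := geomb (by positivity) h4z1 M
        have g2 := geomb (by positivity) hz2 M
        have g3 := geomb hz0.le hz1 M
        linarith
    _ ≤ 2 ^ (2 * κ + 1) * Real.sqrt 3 * Real.pi * κ / (6 * (κ - 2) * θ ^ κ) := by
        rw [show 6 * (κ - 2) * θ ^ κ = (6 * (κ - 2)) * θ ^ κ by ring, ← div_div,
          div_le_div_iff_of_pos_right hθκ]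
        set u := (2:ℝ)^(κ-2) with hu_def
        have hu1 : 1 < u := by
          rw [hu_def]
          exact (Real.one_lt_rpow_iff_of_pos two_pos).2 (Or.inl ⟨one_lt_two, by linarith⟩)
        have h42 : (2:ℝ)^(2:ℝ) = 4 := by norm_num
        have h25 : (2:ℝ)^(5:ℝ) = 32 := by norm_num
        have h4zu : 4*z = u⁻¹ := by
          rw [hz_def, hu_def, ← h42, ← Real.rpow_add two_pos,
            ← Real.rpow_neg (by norm_num : (0:ℝ) ≤ 2)]
          congr 1
          ring
        have h2κ1 : (2:ℝ)^(2*κ+1) = 32*u^2 := by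
          have hup : u^(2:ℝ) = u^(2:ℕ) := by
            rw [← Real.rpow_natCast u 2]
            norm_num
          rw [show (2*κ+1 : ℝ) = (κ-2)*2 + 5 by ring, Real.rpow_add two_pos,
            Real.rpow_mul (by norm_num : (0:ℝ) ≤ 2), h25, ← hu_def, hup]
          ring
        have hu_lb : 1 + 0.69*(κ-2) ≤ u := by
          rw [hu_def, Real.rpow_def_of_pos two_pos]
          have ha := Real.add_one_le_exp (Real.log 2 * (κ-2))
          have hb := Real.log_two_gt_d9
          nlinarith
        have hsp : 5.1 ≤ Real.sqrt 3 * Real.pi := by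
          have h3 : Real.sqrt 3 ^ 2 = 3 := Real.sq_sqrt (by norm_num)
          have hs0 : 0 ≤ Real.sqrt 3 := Real.sqrt_nonneg 3
          have hπ := Real.pi_gt_three
          nlinarith
        rw [h4zu, h2κ1]
        have e1 : 1 - u⁻¹ = (u-1)/u := by
          field_simp
        rw [e1, one_div_div]
        have m2 : 8 * (1/(1-2*z)) ≤ 16 := by
          rw [mul_one_div, div_le_iff₀ (by linarith)]
          linarith
        have m3 : 1/(1-z) ≤ 4/3 := by
          rw [div_le_iff₀ (by linarith)]
          linarith
        have hmain := numcore (κ-2) u (Real.sqrt 3) Real.pi (by linarith) hu1 hu_lb hsp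
        rw [show κ-2+2 = κ by ring] at hmain
        have e2 : 16*(u/(u-1)) = 16*u/(u-1) := (mul_div_assoc _ _ _).symm
        linarith
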